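/- arXiv:0907.0896 — 3 statements merged into one kernel-verified Lean document; each statement's English description precedes it below -/
import Mathlib

section
/- The universal critical variety Σ(A) = {(x, λ) ∈ M × C^n : ω_λ(x) = 0} is a smooth complex submanifold of M × C^n of codimension ℓ; in fact, the projection π_1 : Σ(A) → M onto the first factor is a trivial vector bundle of rank n - ℓ, with Σ(A) ≅ M × W where W = {λ ∈ C^n : Σ_{i=1}^n λ_i f_i = 0}. -/
/-!
STATEMENT 1: For a central essential arrangement with linear forms
`f_i(x) = ∑_j c i j * x_j` and complement `M`, the universal critical variety
`Σ(A) = {(x, λ) ∈ M × ℂⁿ : ω_λ(x) = 0}` (where `ω_λ = ∑ λ_i df_i/f_i`) is, via the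
projection to the first factor, a trivial vector bundle over `M` of rank `n - ℓ`
(hence a smooth complex submanifold of `M × ℂⁿ` of codimension `ℓ`): the map
`s : M × W → Σ(A)`, `s(x, λ) = (x, (λ_1 f_1(x), …, λ_n f_n(x)))`, where
`W = {λ : ∑ λ_i f_i = 0}` is an `(n-ℓ)`-dimensional subspace, is a homeomorphism
(fibrewise linear over `M`).
-/
theorem universal_critical_set_is_trivial_bundle
    (ℓ n : ℕ) (c : Fin n → Fin ℓ → ℂ)
    (hess : Submodule.span ℂ (Set.range c) = ⊤)
    (M : Set (Fin ℓ → ℂ)) (hM : M = {x | ∀ i, (∑ j, c i j * x j) ≠ 0})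
    (W : Submodule ℂ (Fin n → ℂ)) (hW : W = LinearMap.ker (Fintype.linearCombination ℂ c))
    (Sig : Set ((Fin ℓ → ℂ) × (Fin n → ℂ)))
    (hSig : Sig = {p | (∀ i, (∑ j, c i j * p.1 j) ≠ 0) ∧
      ∀ j, (∑ i, p.2 i * c i j / (∑ j', c i j' * p.1 j')) = 0}) :
    Module.finrank ℂ W = n - ℓ ∧
    ∃ h : (M × W) ≃ₜ Sig,
      ∀ q : M × W,
        (↑(h q) : (Fin ℓ → ℂ) × (Fin n → ℂ)).1 = (q.1 : Fin ℓ → ℂ) ∧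
        ∀ i, (↑(h q) : (Fin ℓ → ℂ) × (Fin n → ℂ)).2 i =
          (q.2 : Fin n → ℂ) i * ∑ j, c i j * (q.1 : Fin ℓ → ℂ) j := by
  subst hM hW hSig
  constructor
  · have h1 := (Fintype.linearCombination ℂ c).finrank_range_add_finrank_ker
    have h2 : LinearMap.range (Fintype.linearCombination ℂ c) = ⊤ := by
      rw [Fintype.range_linearCombination, hess]
    rw [h2] at h1
    simp [Module.finrank_pi, finrank_top] at h1 ⊢
    omega
  · -- key membership lemmas
    have memW : ∀ (v : Fin n → ℂ),
        v ∈ LinearMap.ker (Fintype.linearCombination ℂ c) ↔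
        ∀ j, ∑ i, v i * c i j = 0 := by
      intro v
      rw [LinearMap.mem_ker, Fintype.linearCombination_apply, funext_iff]
      simp [Finset.sum_apply, smul_eq_mul]
    refine ⟨Homeomorph.mk ⟨
      fun q => ⟨(q.1.1, fun i => q.2.1 i * ∑ j, c i j * q.1.1 j), ?_⟩,
      fun p => ⟨⟨p.1.1, p.2.1⟩, ⟨fun i => p.1.2 i / ∑ j, c i j * p.1.1 j, ?_⟩⟩,
      ?_, ?_⟩ ?_ ?_, ?_⟩
    · obtain ⟨⟨x, hx⟩, ⟨v, hv⟩⟩ := q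
      refine ⟨hx, fun j => ?_⟩
      refine Eq.trans (Finset.sum_congr rfl fun i _ => ?_) ((memW v).1 hv j)
      show v i * (∑ j', c i j' * x j') * c i j / (∑ j', c i j' * x j') = v i * c i j
      have hS : (∑ j', c i j' * x j') ≠ 0 := hx i
      field_simp
    · obtain ⟨⟨x, μ⟩, hx, hsum⟩ := p
      rw [memW]
      intro j
      refine Eq.trans (Finset.sum_congr rfl fun i _ => ?_) (hsum j)
      show μ i / (∑ j', c i j' * x j') * c i j = μ i * c i j / (∑ j', c i j' * x j')
      field_simp
    · rintro ⟨⟨x, hx⟩, ⟨v, hv⟩⟩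
      ext
      · rfl
      · simp only
        exact mul_div_cancel_right₀ _ (hx _)
    · rintro ⟨⟨x, μ⟩, hx, hsum⟩
      ext
      · rfl
      · simp only
        exact div_mul_cancel₀ _ (hx _)
    · apply Continuous.subtype_mk
      refine Continuous.prodMk ?_ ?_
      · exact continuous_subtype_val.comp continuous_fst
      · refine continuous_pi fun i => Continuous.mul ?_ ?_
        · exact (continuous_apply i).comp (continuous_subtype_val.comp continuous_snd)
        · refine continuous_finset_sum _ fun j _ => Continuous.mul continuous_const ?_
          exact (continuous_apply j).comp (continuous_subtype_val.comp continuous_fst)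
    · refine Continuous.prodMk ?_ ?_
      · apply Continuous.subtype_mk
        exact (continuous_fst.comp continuous_subtype_val)
      · apply Continuous.subtype_mk
        refine continuous_pi fun i => Continuous.div ?_ ?_ ?_
        · exact (continuous_apply i).comp (continuous_snd.comp continuous_subtype_val)
        · refine continuous_finset_sum _ fun j _ => Continuous.mul continuous_const ?_
          exact (continuous_apply j).comp (continuous_fst.comp continuous_subtype_val)
        · rintro ⟨⟨x, μ⟩, hx, hsum⟩
          exact hx i
    · intro q
      exact ⟨rfl, fun i => rfl⟩
end

section
/- For any central arrangement A, the ideal quotient (I' : Q) equals the logarithmic ideal I(A), where I' = (Q d_1, ..., Q d_ℓ) is the ideal of S obtained by clearing denominators in the universal critical equations. -/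
open MvPolynomial Finset

/-- The `i`-th defining linear form, in `S = ℂ[a_1,…,a_n,x_1,…,x_ℓ]`
(variables `Sum.inl i = a_i`, `Sum.inr j = x_j`). -/
noncomputable def fS {ℓ n : ℕ} (c : Fin n → Fin ℓ → ℂ) (i : Fin n) :
    MvPolynomial (Fin n ⊕ Fin ℓ) ℂ :=
  ∑ j, C (c i j) * X (Sum.inr j)

/-- The defining polynomial `Q = f_1 ⋯ f_n` of the arrangement, in `S`. -/
noncomputable def QS {ℓ n : ℕ} (c : Fin n → Fin ℓ → ℂ) : MvPolynomial (Fin n ⊕ Fin ℓ) ℂ :=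
  ∏ i, fS c i

/-- `Q/f_i`. -/
noncomputable def Qdiv {ℓ n : ℕ} (c : Fin n → Fin ℓ → ℂ) (i : Fin n) :
    MvPolynomial (Fin n ⊕ Fin ℓ) ℂ :=
  ∏ k ∈ univ.erase i, fS c k

/-- `Q·d_j = ∑_i a_i c_{ij} Q/f_i`, the numerator of the `j`-th coordinate of the
universal 1-form `ω_a = ∑_i a_i df_i/f_i`. -/
noncomputable def Qd {ℓ n : ℕ} (c : Fin n → Fin ℓ → ℂ) (j : Fin ℓ) :
    MvPolynomial (Fin n ⊕ Fin ℓ) ℂ :=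
  ∑ i, X (Sum.inl i) * C (c i j) * Qdiv c i

/-- `θ = ∑_j θ_j ∂/∂x_j` (coefficients in `S`) is a logarithmic derivation: `θ(Q) ∈ (Q)`. -/
def IsLogDer {ℓ n : ℕ} (c : Fin n → Fin ℓ → ℂ)
    (θ : Fin ℓ → MvPolynomial (Fin n ⊕ Fin ℓ) ℂ) : Prop :=
  (∑ j, θ j * pderiv (Sum.inr j) (QS c)) ∈ Ideal.span {QS c}

/-- `g = ⟨θ, ω_a⟩`, i.e. `Q·g = ∑_i a_i (Q/f_i) θ(f_i)`. -/
def PairsWith {ℓ n : ℕ} (c : Fin n → Fin ℓ → ℂ)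
    (θ : Fin ℓ → MvPolynomial (Fin n ⊕ Fin ℓ) ℂ)
    (g : MvPolynomial (Fin n ⊕ Fin ℓ) ℂ) : Prop :=
  QS c * g = ∑ i, X (Sum.inl i) * Qdiv c i * (∑ j, θ j * pderiv (Sum.inr j) (fS c i))

/-- The logarithmic ideal `I(A) = (⟨θ, ω_a⟩ : θ ∈ Der(A))  ⊆ S`. -/
noncomputable def Ilog {ℓ n : ℕ} (c : Fin n → Fin ℓ → ℂ) :
    Ideal (MvPolynomial (Fin n ⊕ Fin ℓ) ℂ) :=
  Ideal.span {g | ∃ θ, IsLogDer c θ ∧ PairsWith c θ g}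

/-- The grading of `S` by degree in the `x`-variables. -/
noncomputable def xwt {ℓ n : ℕ} : (Fin n ⊕ Fin ℓ) → ℕ :=
  Sum.elim (fun _ => 0) (fun _ => 1)

/-! ### Auxiliary lemmas -/

section Aux

variable {ℓ n : ℕ} (c : Fin n → Fin ℓ → ℂ)

local notation "S" => MvPolynomial (Fin n ⊕ Fin ℓ) ℂ

/-- Product rule for `pderiv` over a finite product. -/
lemma pderiv_finset_prod {σ ι R : Type*} [CommRing R] [DecidableEq ι] (s : σ) (t : Finset ι)
    (f : ι → MvPolynomial σ R) :
    pderiv s (∏ i ∈ t, f i) = ∑ i ∈ t, (∏ k ∈ t.erase i, f k) * pderiv s (f i) := by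
  induction t using Finset.induction_on with
  | empty => simp
  | @insert a t ha ih =>
    rw [Finset.prod_insert ha, pderiv_mul, ih, Finset.sum_insert ha, Finset.erase_insert ha,
      Finset.mul_sum]
    congr 1
    · ring
    · refine Finset.sum_congr rfl fun i hi => ?_
      rw [Finset.erase_insert_of_ne (by rintro rfl; exact ha hi),
        Finset.prod_insert (fun h => ha (Finset.mem_of_mem_erase h))]
      ring

lemma pderiv_fS (i : Fin n) (j : Fin ℓ) :
    pderiv (Sum.inr j : Fin n ⊕ Fin ℓ) (fS c i) = C (c i j) := by
  classical
  rw [fS, map_sum]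
  rw [Finset.sum_eq_single j]
  · simp
  · intro b _ hb
    simp [pderiv_X, Sum.inr.injEq, hb.symm]
  · simp

lemma pderiv_QS (j : Fin ℓ) :
    pderiv (Sum.inr j : Fin n ⊕ Fin ℓ) (QS c) = ∑ i, Qdiv c i * C (c i j) := by
  rw [QS, pderiv_finset_prod]
  exact Finset.sum_congr rfl fun i _ => by rw [pderiv_fS, Qdiv]

lemma linear_comb_eq_zero {b : Fin ℓ → ℂ}
    (h : (∑ j, C (b j) * X (Sum.inr j) : S) = 0) (j : Fin ℓ) : b j = 0 := by
  classical
  have h2 := congrArg (coeff (Finsupp.single (Sum.inr j) (1 : ℕ))) h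
  rw [coeff_zero, coeff_sum] at h2
  rw [Finset.sum_eq_single j] at h2
  · simpa using h2
  · intro b' _ hb'
    have : (Finsupp.single (Sum.inr b' : Fin n ⊕ Fin ℓ) (1 : ℕ)) ≠
        Finsupp.single (Sum.inr j) 1 := by
      intro hs
      exact hb' (by simpa using (Finsupp.single_left_injective one_ne_zero) hs)
    simp [coeff_C_mul, coeff_X', this]
  · simp

/-- `fS c k - C t * fS c i` as a linear combination. -/
lemma fS_sub_C_mul (i k : Fin n) (t : ℂ) :
    fS c k - C t * fS c i = ∑ j, C (c k j - t * c i j) * X (Sum.inr j) := by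
  rw [fS, fS, Finset.mul_sum, ← Finset.sum_sub_distrib]
  refine Finset.sum_congr rfl fun j _ => ?_
  rw [C_sub, C_mul]
  ring

/-- The substitution homomorphism that reduces modulo `f_i` (eliminating `x_{j0}`). -/
noncomputable def phi (i : Fin n) (j0 : Fin ℓ) : S →ₐ[ℂ] S :=
  aeval (fun v => if v = Sum.inr j0 then X (Sum.inr j0) - C (c i j0)⁻¹ * fS c i else X v)

lemma phi_fS (i : Fin n) (j0 : Fin ℓ) (k : Fin n) :
    phi c i j0 (fS c k) = fS c k - C (c k j0 * (c i j0)⁻¹) * fS c i := by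
  classical
  rw [fS, map_sum]
  have key : ∀ j : Fin ℓ,
      phi c i j0 (C (c k j) * X (Sum.inr j))
        = C (c k j) * X (Sum.inr j)
          - (if j = j0 then C (c k j0 * (c i j0)⁻¹) * fS c i else 0) := by
    intro j
    rw [map_mul]
    rw [show phi c i j0 (C (c k j)) = C (c k j) from by
      simpa using (phi c i j0).commutes (c k j)]
    rw [phi, aeval_X]
    by_cases hj : j = j0
    · subst hj
      simp only [if_true, ite_true, reduceIte, C_mul]
      ring
    · have : (Sum.inr j : Fin n ⊕ Fin ℓ) ≠ Sum.inr j0 := by simp [hj]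
      rw [if_neg this, if_neg hj, sub_zero]
  rw [Finset.sum_congr rfl fun j _ => key j, Finset.sum_sub_distrib,
    Finset.sum_ite_eq' Finset.univ j0, if_pos (Finset.mem_univ j0), ← fS]

lemma phi_X_ne (i : Fin n) (j0 : Fin ℓ) (v : Fin n ⊕ Fin ℓ) (hv : v ≠ Sum.inr j0) :
    phi c i j0 (X v) = X v := by
  rw [phi, aeval_X, if_neg hv]

lemma span_fS_eq_ker (i : Fin n) (j0 : Fin ℓ) (hj0 : c i j0 ≠ 0) :
    Ideal.span {fS c i} = RingHom.ker (phi c i j0).toRingHom := by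
  apply le_antisymm
  · rw [Ideal.span_le, Set.singleton_subset_iff, SetLike.mem_coe, RingHom.mem_ker,
      AlgHom.toRingHom_eq_coe, RingHom.coe_coe, phi_fS, mul_inv_cancel₀ hj0, C_1, one_mul,
      sub_self]
  · intro q hq
    rw [AlgHom.toRingHom_eq_coe, RingHom.mem_ker, RingHom.coe_coe] at hq
    have hπ : (Ideal.Quotient.mkₐ ℂ (Ideal.span {fS c i})).comp (phi c i j0)
        = Ideal.Quotient.mkₐ ℂ (Ideal.span {fS c i}) := by
      apply MvPolynomial.algHom_ext
      intro v
      rw [AlgHom.comp_apply]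
      by_cases hv : v = Sum.inr j0
      · subst hv
        rw [phi, aeval_X, if_pos rfl]
        simp only [Ideal.Quotient.mkₐ_eq_mk]
        rw [Ideal.Quotient.eq]
        have : X (Sum.inr j0) - C (c i j0)⁻¹ * fS c i - X (Sum.inr j0)
            = -(C (c i j0)⁻¹ * fS c i) := by ring
        rw [this]
        exact neg_mem (Ideal.mul_mem_left _ _ (Ideal.subset_span rfl))
      · rw [phi_X_ne c i j0 v hv]
    have := congrArg (fun ψ : S →ₐ[ℂ] S ⧸ Ideal.span {fS c i} => ψ q) hπ
    simp only [AlgHom.comp_apply, hq, map_zero, Ideal.Quotient.mkₐ_eq_mk] at this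
    exact (Ideal.Quotient.eq_zero_iff_mem).mp this.symm

lemma span_fS_prime (i : Fin n) (j0 : Fin ℓ) (hj0 : c i j0 ≠ 0) :
    (Ideal.span {fS c i}).IsPrime := by
  rw [span_fS_eq_ker c i j0 hj0]
  exact RingHom.ker_isPrime _

lemma X_inl_notMem (i : Fin n) (j0 : Fin ℓ) (hj0 : c i j0 ≠ 0) (k : Fin n) :
    X (Sum.inl k) ∉ Ideal.span {fS c i} := by
  rw [span_fS_eq_ker c i j0 hj0]
  intro h
  rw [AlgHom.toRingHom_eq_coe, RingHom.mem_ker, RingHom.coe_coe,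
    phi_X_ne c i j0 _ (by simp)] at h
  exact MvPolynomial.X_ne_zero _ h

lemma fS_notMem (hprop : ∀ i k, i ≠ k → ∀ t : ℂ, c i ≠ t • c k)
    (i : Fin n) (j0 : Fin ℓ) (hj0 : c i j0 ≠ 0) (k : Fin n) (hki : k ≠ i) :
    fS c k ∉ Ideal.span {fS c i} := by
  rw [span_fS_eq_ker c i j0 hj0]
  intro h
  rw [AlgHom.toRingHom_eq_coe, RingHom.mem_ker, RingHom.coe_coe, phi_fS,
    fS_sub_C_mul] at h
  have hall := linear_comb_eq_zero h
  apply hprop k i hki (c k j0 * (c i j0)⁻¹)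
  funext j
  have := hall j
  simp only [Pi.smul_apply, smul_eq_mul]
  exact sub_eq_zero.mp this

/-- Swapping the double sum. -/
lemma sum_swap_Qd (θ : Fin ℓ → S) :
    ∑ j, θ j * Qd c j = ∑ i, X (Sum.inl i) * Qdiv c i * (∑ j, θ j * C (c i j)) := by
  unfold Qd
  simp_rw [Finset.mul_sum]
  rw [Finset.sum_comm]
  exact Finset.sum_congr rfl fun i _ => Finset.sum_congr rfl fun j _ => by ring

lemma sum_swap_QS (θ : Fin ℓ → S) :
    ∑ j, θ j * (∑ i, Qdiv c i * C (c i j)) = ∑ i, Qdiv c i * (∑ j, θ j * C (c i j)) := by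
  simp_rw [Finset.mul_sum]
  rw [Finset.sum_comm]
  refine Finset.sum_congr rfl fun i _ => Finset.sum_congr rfl fun j _ => by ring

lemma fS_mul_Qdiv (i : Fin n) : fS c i * Qdiv c i = QS c := by
  rw [Qdiv, QS, Finset.mul_prod_erase _ _ (Finset.mem_univ i)]

end Aux

/-!
STATEMENT 5: For any central arrangement `A` (nonzero, pairwise non-proportional linear
forms), the ideal quotient `(I' : Q)` equals the logarithmic ideal `I(A)`, where
`I' = (Q d_1, …, Q d_ℓ)` is the ideal of `S` obtained by clearing denominators in the
universal critical equations `d_j = ∑_i a_i c_{ij}/f_i`.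
-/
theorem naive_ideal_colon_Q_eq_logarithmic_ideal
    (ℓ n : ℕ) (c : Fin n → Fin ℓ → ℂ)
    (hnz : ∀ i, c i ≠ 0)
    (hprop : ∀ i k, i ≠ k → ∀ t : ℂ, c i ≠ t • c k) :
    ∀ g : MvPolynomial (Fin n ⊕ Fin ℓ) ℂ,
      g * QS c ∈ Ideal.span (Set.range (Qd c)) ↔ g ∈ Ilog c := by
  classical
  intro g
  constructor
  · intro h
    obtain ⟨θ, hθ⟩ := (Submodule.mem_span_range_iff_exists_fun _).mp h
    have hsum : ∑ j, θ j * Qd c j = g * QS c := by simpa [smul_eq_mul] using hθ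
    set T : Fin n → MvPolynomial (Fin n ⊕ Fin ℓ) ℂ := fun i => ∑ j, θ j * C (c i j) with hT
    have hmain : ∑ i, X (Sum.inl i) * Qdiv c i * T i = g * QS c := by
      rw [← sum_swap_Qd, hsum]
    have hTi : ∀ i, ∃ h, T i = fS c i * h := by
      intro i
      obtain ⟨j0, hj0⟩ : ∃ j0, c i j0 ≠ 0 := by
        by_contra hc; push_neg at hc; exact hnz i (funext hc)
      have hprime : (Ideal.span {fS c i}).IsPrime := span_fS_prime c i j0 hj0
      have h1 : X (Sum.inl i) * Qdiv c i * T i ∈ Ideal.span {fS c i} := by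
        have e : X (Sum.inl i) * Qdiv c i * T i
            = g * QS c - ∑ k ∈ univ.erase i, X (Sum.inl k) * Qdiv c k * T k := by
          rw [← hmain, ← Finset.add_sum_erase _ _ (Finset.mem_univ i)]
          ring
        rw [e]
        refine sub_mem (Ideal.mem_span_singleton.mpr ?_) (Ideal.sum_mem _ fun k hk => ?_)
        · exact Dvd.dvd.mul_left (Finset.dvd_prod_of_mem _ (Finset.mem_univ i)) g
        · refine Ideal.mem_span_singleton.mpr ?_
          have hdvd : fS c i ∣ Qdiv c k := by
            refine Finset.dvd_prod_of_mem _ ?_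
            exact Finset.mem_erase.mpr ⟨fun hik => (Finset.mem_erase.mp hk).1 hik.symm,
              Finset.mem_univ i⟩
          exact (hdvd.mul_left _).mul_right _
      rcases hprime.mem_or_mem h1 with h2 | h2
      · exfalso
        rcases hprime.mem_or_mem h2 with h3 | h3
        · exact X_inl_notMem c i j0 hj0 i h3
        · rw [Qdiv, Ideal.IsPrime.prod_mem_iff] at h3
          obtain ⟨k, hk, hk3⟩ := h3
          exact fS_notMem c hprop i j0 hj0 k (Finset.mem_erase.mp hk).1 hk3
      · obtain ⟨a, ha⟩ := Ideal.mem_span_singleton'.mp h2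
        exact ⟨a, by rw [← ha]; ring⟩
    choose hfun hhfun using hTi
    refine Ideal.subset_span ⟨θ, ?_, ?_⟩
    · unfold IsLogDer
      have key : ∑ j, θ j * pderiv (Sum.inr j) (QS c) = QS c * ∑ i, hfun i := by
        calc ∑ j, θ j * pderiv (Sum.inr j) (QS c)
            = ∑ j, θ j * (∑ i, Qdiv c i * C (c i j)) := by
              exact Finset.sum_congr rfl fun j _ => by rw [pderiv_QS]
          _ = ∑ i, Qdiv c i * T i := sum_swap_QS c θ
          _ = ∑ i, QS c * hfun i := by
              refine Finset.sum_congr rfl fun i _ => ?_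
              rw [hhfun i, ← fS_mul_Qdiv c i]
              ring
          _ = QS c * ∑ i, hfun i := by rw [Finset.mul_sum]
      rw [key]
      exact Ideal.mem_span_singleton.mpr ⟨∑ i, hfun i, rfl⟩
    · unfold PairsWith
      have : ∀ i : Fin n, (∑ j, θ j * pderiv (Sum.inr j) (fS c i)) = T i := by
        intro i
        exact Finset.sum_congr rfl fun j _ => by rw [pderiv_fS]
      simp_rw [this]
      rw [mul_comm, ← hmain]
  · intro hg
    have hcolon : Ilog c ≤ (Ideal.span (Set.range (Qd c))).colon (Ideal.span {QS c}) := by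
      rw [Ilog, Ideal.span_le]
      rintro g' ⟨θ, _, hpair⟩
      rw [SetLike.mem_coe, Ideal.mem_colon_span_singleton]
      rw [PairsWith] at hpair
      have hp2 : ∀ i : Fin n, (∑ j, θ j * pderiv (Sum.inr j) (fS c i))
          = ∑ j, θ j * C (c i j) := by
        intro i
        exact Finset.sum_congr rfl fun j _ => by rw [pderiv_fS]
      simp_rw [hp2] at hpair
      rw [← sum_swap_Qd] at hpair
      have : g' * QS c = ∑ j, θ j * Qd c j := by rw [mul_comm, hpair]
      rw [this]
      exact Ideal.sum_mem _ fun j _ =>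
        Ideal.mul_mem_left _ _ (Ideal.subset_span ⟨j, rfl⟩)
    exact Ideal.mem_colon_span_singleton.mp (hcolon hg)
end

section
/- For an arrangement A of n ≥ 2 lines through the origin in C^2, the logarithmic ideal I(A) ⊂ C[a_1,...,a_n,x_1,x_2] is a complete intersection generated by two elements of x-degrees 0 and n-2, namely Σ_{i=1}^n a_i and Σ_{i=2}^n a_i (Q/(f_1 f_i)) (∂f_1/∂x_1 · ∂f_i/∂x_2 − ∂f_1/∂x_2 · ∂f_i/∂x_1). -/
open MvPolynomial Finset

namespace PencilAux

variable {σ : Type*} [DecidableEq σ]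

noncomputable def lsub (u v : σ) (d : ℂ) :
    MvPolynomial σ ℂ →ₐ[ℂ] MvPolynomial σ ℂ :=
  aeval (fun w => if w = u then C d * X v else X w)

@[simp] lemma lsub_X_self (u v : σ) (d : ℂ) : lsub u v d (X u) = C d * X v := by
  simp [lsub]

lemma lsub_X_of_ne (u v : σ) (d : ℂ) {w : σ} (hw : w ≠ u) : lsub u v d (X w) = X w := by
  simp [lsub, hw]

lemma lsub_g (u v : σ) (huv : v ≠ u) (d : ℂ) : lsub u v d (X u - C d * X v) = 0 := by
  rw [map_sub, map_mul, lsub_X_self, lsub_X_of_ne u v d huv]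
  have : (lsub u v d) (C d) = C d := by simp [lsub]
  rw [this, sub_self]

lemma lsub_idem (u v : σ) (huv : v ≠ u) (d : ℂ) (p : MvPolynomial σ ℂ) :
    lsub u v d (lsub u v d p) = lsub u v d p := by
  have h : (lsub u v d).comp (lsub u v d) = lsub u v d := by
    apply algHom_ext
    intro w
    by_cases hw : w = u
    · rw [hw]
      simp only [AlgHom.comp_apply, lsub_X_self, map_mul]
      rw [lsub_X_of_ne u v d huv]
      have : (lsub u v d) (C d) = C d := by simp [lsub]
      rw [this]
    · simp only [AlgHom.comp_apply, lsub_X_of_ne u v d hw]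
  exact DFunLike.congr_fun h p

lemma sub_lsub_mem (u v : σ) (d : ℂ) (p : MvPolynomial σ ℂ) :
    p - lsub u v d p ∈ Ideal.span {X u - C d * X v} := by
  induction p using MvPolynomial.induction_on with
  | C a =>
    have : (lsub u v d) (C a) = C a := by simp [lsub]
    rw [this, sub_self]; exact Ideal.zero_mem _
  | add p q hp hq =>
    have : p + q - lsub u v d (p + q)
        = (p - lsub u v d p) + (q - lsub u v d q) := by rw [map_add]; ring
    rw [this]; exact Ideal.add_mem _ hp hq
  | mul_X p w hp =>
    have : p * X w - lsub u v d (p * X w)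
        = (p - lsub u v d p) * X w + lsub u v d p * (X w - lsub u v d (X w)) := by
      rw [map_mul]; ring
    rw [this]
    refine Ideal.add_mem _ (Ideal.mul_mem_right _ _ hp) ?_
    by_cases hw : w = u
    · subst hw
      rw [lsub_X_self]
      exact Ideal.mul_mem_left _ _ (Ideal.subset_span (Set.mem_singleton _))
    · rw [lsub_X_of_ne u v d hw, sub_self, mul_zero]; exact Ideal.zero_mem _

lemma dvd_iff_lsub_eq_zero (u v : σ) (huv : v ≠ u) (d : ℂ) (p : MvPolynomial σ ℂ) :
    (X u - C d * X v) ∣ p ↔ lsub u v d p = 0 := by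
  constructor
  · rintro ⟨r, rfl⟩
    rw [map_mul, lsub_g u v huv, zero_mul]
  · intro h
    have := sub_lsub_mem u v d p
    rw [h, sub_zero] at this
    exact Ideal.mem_span_singleton.1 this

lemma prime_lin (u v : σ) (huv : v ≠ u) (d : ℂ) :
    Prime (X u - C d * X v : MvPolynomial σ ℂ) := by
  refine ⟨?_, ?_, ?_⟩
  · intro h0
    have := congrArg (coeff (Finsupp.single u 1)) h0
    simp [coeff_X', Finsupp.single_eq_single_iff, huv] at this
  · intro hun
    have := hun.map (lsub u v d)
    rw [lsub_g u v huv] at this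
    exact not_isUnit_zero this
  · intro a b hab
    rw [dvd_iff_lsub_eq_zero u v huv] at hab ⊢
    rw [dvd_iff_lsub_eq_zero u v huv d b]
    rw [map_mul] at hab
    exact mul_eq_zero.1 hab

end PencilAux

namespace PencilAux

variable {n : ℕ} (c : Fin n → Fin 2 → ℂ)

lemma sum_fin2 {M : Type*} [AddCommMonoid M] (F : Fin 2 → M) {u v : Fin 2} (h : u ≠ v) :
    ∑ j, F j = F u + F v := by
  fin_cases u <;> fin_cases v <;> simp_all [Fin.sum_univ_two, add_comm]

lemma fin2_eq_or {u v : Fin 2} (h : u ≠ v) (j : Fin 2) : j = u ∨ j = v := by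
  omega

lemma fS_eq (i : Fin n) :
    fS c i = C (c i 0) * X (Sum.inr 0) + C (c i 1) * X (Sum.inr 1) := by
  simp [fS, Fin.sum_univ_two]

lemma fS_eq' (i : Fin n) {u v : Fin 2} (h : u ≠ v) :
    fS c i = C (c i u) * X (Sum.inr u) + C (c i v) * X (Sum.inr v) := by
  rw [fS]; exact sum_fin2 _ h

lemma fS_norm (i : Fin n) (h : c i ≠ 0) :
    ∃ u v : Fin 2, u ≠ v ∧ c i u ≠ 0 ∧
      fS c i = C (c i u) * (X (Sum.inr u) - C (-(c i v) / c i u) * X (Sum.inr v)) := by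
  have h' : c i 0 ≠ 0 ∨ c i 1 ≠ 0 := by
    by_contra hc
    push_neg at hc
    exact h (funext fun j => by fin_cases j <;> simp [hc.1, hc.2])
  have key : ∀ u v : Fin 2, u ≠ v → c i u ≠ 0 →
      fS c i = C (c i u) * (X (Sum.inr u) - C (-(c i v) / c i u) * X (Sum.inr v)) := by
    intro u v huv hu
    have hd : (c i u) * (-(c i v) / c i u) = -(c i v) := by
      field_simp
    rw [mul_sub, ← mul_assoc, ← C_mul, hd, map_neg, neg_mul, sub_neg_eq_add]
    exact fS_eq' c i huv
  rcases h' with h0 | h1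
  · exact ⟨0, 1, by decide, h0, key 0 1 (by decide) h0⟩
  · exact ⟨1, 0, by decide, h1, key 1 0 (by decide) h1⟩

lemma prime_fS (i : Fin n) (h : c i ≠ 0) : Prime (fS c i) := by
  obtain ⟨u, v, huv, hu, heq⟩ := fS_norm c i h
  have hvu : (Sum.inr v : Fin n ⊕ Fin 2) ≠ Sum.inr u := by
    simp [huv.symm]
  have hp := prime_lin (Sum.inr u : Fin n ⊕ Fin 2) (Sum.inr v) hvu (-(c i v) / c i u)
  have hUC : IsUnit (C (c i u) : MvPolynomial (Fin n ⊕ Fin 2) ℂ) :=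
    IsUnit.of_mul_eq_one _ (by rw [← C_mul, mul_inv_cancel₀ hu, C_1])
  have hassoc : Associated
      (X (Sum.inr u) - C (-(c i v) / c i u) * X (Sum.inr v) : MvPolynomial (Fin n ⊕ Fin 2) ℂ)
      (fS c i) := by
    rw [heq]
    exact ⟨hUC.unit, by rw [IsUnit.unit_spec, mul_comm]⟩
  exact hassoc.prime hp

lemma fS_ne_zero (i : Fin n) (h : c i ≠ 0) : fS c i ≠ 0 := (prime_fS c i h).ne_zero

lemma not_dvd_fS (hprop : ∀ i k, i ≠ k → ∀ t : ℂ, c i ≠ t • c k)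
    (hnz : ∀ i, c i ≠ 0) (i k : Fin n) (hik : i ≠ k) : ¬ fS c i ∣ fS c k := by
  obtain ⟨u, v, huv, hu, heq⟩ := fS_norm c i (hnz i)
  have hvu : (Sum.inr v : Fin n ⊕ Fin 2) ≠ Sum.inr u := by simp [huv.symm]
  intro hdvd
  set d : ℂ := -(c i v) / c i u with hd
  have hg : (X (Sum.inr u) - C d * X (Sum.inr v) : MvPolynomial (Fin n ⊕ Fin 2) ℂ) ∣ fS c k := by
    refine dvd_trans ?_ hdvd
    exact ⟨C (c i u), by rw [heq, mul_comm]⟩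
  rw [dvd_iff_lsub_eq_zero _ _ hvu] at hg
  rw [fS_eq' c k huv, map_add, map_mul, map_mul, lsub_X_self,
    lsub_X_of_ne _ _ _ hvu] at hg
  have hC1 : (lsub (Sum.inr u : Fin n ⊕ Fin 2) (Sum.inr v) d) (C (c k u)) = C (c k u) := by
    simp [lsub]
  have hC2 : (lsub (Sum.inr u : Fin n ⊕ Fin 2) (Sum.inr v) d) (C (c k v)) = C (c k v) := by
    simp [lsub]
  rw [hC1, hC2] at hg
  have hg2 : (C (c k u * d + c k v) : MvPolynomial (Fin n ⊕ Fin 2) ℂ) * X (Sum.inr v) = 0 := by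
    rw [map_add, map_mul]; linear_combination hg
  have hX : (X (Sum.inr v) : MvPolynomial (Fin n ⊕ Fin 2) ℂ) ≠ 0 := X_ne_zero _
  have hc0 : c k u * d + c k v = 0 := by
    have := mul_eq_zero.1 hg2
    rcases this with h | h
    · exact (C_eq_zero).1 h
    · exact absurd h hX
  have hrel : c k v * c i u = c k u * c i v := by
    rw [hd] at hc0
    field_simp at hc0
    linear_combination hc0
  refine absurd (funext fun j => ?_) (hprop k i hik.symm (c k u / c i u))
  rw [Pi.smul_apply, smul_eq_mul]
  rcases fin2_eq_or huv j with h | h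
  · rw [h]
    field_simp
  · rw [h]
    field_simp
    linear_combination hrel

end PencilAux

namespace PencilAux

variable {n : ℕ} (c : Fin n → Fin 2 → ℂ)

lemma prod_dvd_of_forall_dvd {α ι : Type*} [CommMonoidWithZero α] [IsCancelMulZero α] [DecidableEq ι]
    (s : Finset ι) (f : ι → α) (p : α)
    (hp : ∀ i ∈ s, Prime (f i)) (hnd : ∀ i ∈ s, ∀ k ∈ s, i ≠ k → ¬ f i ∣ f k)
    (hd : ∀ i ∈ s, f i ∣ p) : (∏ i ∈ s, f i) ∣ p := by
  induction s using Finset.induction_on with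
  | empty => simpa using one_dvd p
  | @insert a s ha IH =>
    rw [Finset.prod_insert ha]
    obtain ⟨r, hr⟩ := IH (fun i hi => hp i (mem_insert_of_mem hi))
      (fun i hi k hk h => hnd i (mem_insert_of_mem hi) k (mem_insert_of_mem hk) h)
      (fun i hi => hd i (mem_insert_of_mem hi))
    have hfa : f a ∣ (∏ i ∈ s, f i) * r := hr ▸ hd a (mem_insert_self a s)
    have hnp : ¬ f a ∣ ∏ i ∈ s, f i := by
      intro hdvd
      obtain ⟨k, hk, hdk⟩ := ((hp a (mem_insert_self a s)).dvd_finset_prod_iff _).1 hdvd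
      exact hnd a (mem_insert_self a s) k (mem_insert_of_mem hk)
        (by rintro rfl; exact ha hk) hdk
    obtain ⟨q, hq⟩ := ((hp a (mem_insert_self a s)).2.2 _ _ hfa).resolve_left hnp
    exact ⟨q, by rw [hr, hq, ← mul_assoc, mul_comm (∏ i ∈ s, f i) (f a)]⟩

lemma pderiv_finset_prod {σ ι : Type*} [DecidableEq σ] [DecidableEq ι]
    (v : σ) (s : Finset ι) (f : ι → MvPolynomial σ ℂ) :
    pderiv v (∏ i ∈ s, f i) = ∑ i ∈ s, pderiv v (f i) * ∏ k ∈ s.erase i, f k := by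
  induction s using Finset.induction_on with
  | empty => simp
  | @insert a s ha IH =>
    rw [Finset.prod_insert ha, pderiv_mul, IH, Finset.sum_insert ha, Finset.erase_insert ha,
      Finset.mul_sum]
    congr 1
    refine Finset.sum_congr rfl fun i hi => ?_
    rw [Finset.erase_insert_of_ne (show a ≠ i by rintro rfl; exact ha hi),
      Finset.prod_insert (show a ∉ s.erase i from fun h => ha (Finset.mem_of_mem_erase h))]
    ring

lemma pderiv_fS (i : Fin n) (j : Fin 2) :
    pderiv (Sum.inr j) (fS c i) = C (c i j) := by
  rw [fS, map_sum]
  rw [Finset.sum_eq_single j]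
  · rw [pderiv_C_mul, pderiv_X_self, mul_one]
  · intro b _ hb
    rw [pderiv_C_mul, pderiv_X_of_ne (by simp [hb]), mul_zero]
  · intro h
    exact absurd (Finset.mem_univ j) h

lemma QS_eq (i : Fin n) : QS c = fS c i * Qdiv c i :=
  (Finset.mul_prod_erase _ _ (Finset.mem_univ i)).symm

lemma pderiv_QS (j : Fin 2) :
    pderiv (Sum.inr j) (QS c) = ∑ i, C (c i j) * Qdiv c i := by
  rw [QS, pderiv_finset_prod]
  exact Finset.sum_congr rfl fun i _ => by rw [pderiv_fS, Qdiv]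

lemma Qdiv_mul (i₀ i : Fin n) (hi : i ≠ i₀) :
    Qdiv c i₀ * Qdiv c i = QS c * ∏ k ∈ (univ.erase i₀).erase i, fS c k := by
  have hmem : i ∈ univ.erase i₀ := Finset.mem_erase.2 ⟨hi, Finset.mem_univ i⟩
  have h1 : Qdiv c i₀ = fS c i * ∏ k ∈ (univ.erase i₀).erase i, fS c k :=
    (Finset.mul_prod_erase _ _ hmem).symm
  have hmem2 : i₀ ∈ univ.erase i := Finset.mem_erase.2 ⟨hi.symm, Finset.mem_univ i₀⟩
  have h2 : Qdiv c i = fS c i₀ * ∏ k ∈ (univ.erase i₀).erase i, fS c k := by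
    rw [Qdiv, ← Finset.mul_prod_erase _ _ hmem2, Finset.erase_right_comm]
  rw [h1, h2, QS_eq c i₀, h1]
  ring

lemma logder_sum (θ : Fin 2 → MvPolynomial (Fin n ⊕ Fin 2) ℂ) :
    ∑ j, θ j * pderiv (Sum.inr j) (QS c)
      = ∑ i, Qdiv c i * (θ 0 * C (c i 0) + θ 1 * C (c i 1)) := by
  rw [Fin.sum_univ_two, pderiv_QS, pderiv_QS, Finset.mul_sum, Finset.mul_sum,
    ← Finset.sum_add_distrib]
  exact Finset.sum_congr rfl fun i _ => by ring

lemma pair_sum (θ : Fin 2 → MvPolynomial (Fin n ⊕ Fin 2) ℂ) :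
    ∑ i, X (Sum.inl i) * Qdiv c i * (∑ j, θ j * pderiv (Sum.inr j) (fS c i))
      = ∑ i, X (Sum.inl i) * Qdiv c i * (θ 0 * C (c i 0) + θ 1 * C (c i 1)) := by
  refine Finset.sum_congr rfl fun i _ => ?_
  rw [Fin.sum_univ_two, pderiv_fS, pderiv_fS]

lemma D1_master (φ : Fin n → MvPolynomial (Fin n ⊕ Fin 2) ℂ) :
    ∑ i, φ i * Qdiv c i * (X (Sum.inr 0) * C (c i 0) + X (Sum.inr 1) * C (c i 1))
      = QS c * ∑ i, φ i := by
  rw [Finset.mul_sum]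
  refine Finset.sum_congr rfl fun i _ => ?_
  have hb : (X (Sum.inr 0) * C (c i 0) + X (Sum.inr 1) * C (c i 1)
      : MvPolynomial (Fin n ⊕ Fin 2) ℂ) = fS c i := by
    rw [fS_eq]; ring
  rw [hb, QS_eq c i]
  ring

lemma D2_master (i₀ : Fin n) (φ : Fin n → MvPolynomial (Fin n ⊕ Fin 2) ℂ) :
    ∑ i, φ i * Qdiv c i *
        ((-(C (c i₀ 1)) * Qdiv c i₀) * C (c i 0) + (C (c i₀ 0) * Qdiv c i₀) * C (c i 1))
      = QS c * ∑ i ∈ univ.erase i₀, φ i * (∏ k ∈ (univ.erase i₀).erase i, fS c k) *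
          C (c i₀ 0 * c i 1 - c i₀ 1 * c i 0) := by
  have hterm : ∀ i, φ i * Qdiv c i *
        ((-(C (c i₀ 1)) * Qdiv c i₀) * C (c i 0) + (C (c i₀ 0) * Qdiv c i₀) * C (c i 1))
      = φ i * C (c i₀ 0 * c i 1 - c i₀ 1 * c i 0) * (Qdiv c i₀ * Qdiv c i) := by
    intro i
    rw [map_sub, map_mul, map_mul]
    ring
  rw [← Finset.sum_erase_add _ _ (Finset.mem_univ i₀)]
  have h0 : φ i₀ * Qdiv c i₀ *
        ((-(C (c i₀ 1)) * Qdiv c i₀) * C (c i₀ 0) + (C (c i₀ 0) * Qdiv c i₀) * C (c i₀ 1))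
      = 0 := by
    have : ((-(C (c i₀ 1)) * Qdiv c i₀) * C (c i₀ 0) + (C (c i₀ 0) * Qdiv c i₀) * C (c i₀ 1)
        : MvPolynomial (Fin n ⊕ Fin 2) ℂ) = 0 := by ring
    rw [this, mul_zero]
  rw [h0, add_zero, Finset.mul_sum]
  refine Finset.sum_congr rfl fun i hi => ?_
  rw [hterm i, Qdiv_mul c i₀ i (Finset.mem_erase.1 hi).1]
  ring

end PencilAux

namespace PencilAux

variable {n : ℕ} (c : Fin n → Fin 2 → ℂ)

/-- The Euler derivation. -/
noncomputable def D1 {n : ℕ} (_c : Fin n → Fin 2 → ℂ) :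
    Fin 2 → MvPolynomial (Fin n ⊕ Fin 2) ℂ := fun j => X (Sum.inr j)

/-- The second basic derivation. -/
noncomputable def D2 {n : ℕ} (c : Fin n → Fin 2 → ℂ) (i₀ : Fin n) :
    Fin 2 → MvPolynomial (Fin n ⊕ Fin 2) ℂ := fun j =>
  if j = 0 then -(C (c i₀ 1)) * Qdiv c i₀ else C (c i₀ 0) * Qdiv c i₀

@[simp] lemma D1_zero : D1 c 0 = X (Sum.inr 0) := rfl
@[simp] lemma D1_one : D1 c 1 = X (Sum.inr 1) := rfl
@[simp] lemma D2_zero (i₀ : Fin n) : D2 c i₀ 0 = -(C (c i₀ 1)) * Qdiv c i₀ := rfl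
@[simp] lemma D2_one (i₀ : Fin n) : D2 c i₀ 1 = C (c i₀ 0) * Qdiv c i₀ := rfl

lemma logder_D1 : IsLogDer c (D1 c) := by
  unfold IsLogDer
  rw [logder_sum]
  have h1 : ∑ i, Qdiv c i * (D1 c 0 * C (c i 0) + D1 c 1 * C (c i 1)) = ∑ _i : Fin n, QS c := by
    refine Finset.sum_congr rfl fun i _ => ?_
    rw [D1_zero, D1_one, QS_eq c i, fS_eq]
    ring
  rw [h1, Finset.sum_const]
  exact nsmul_mem (Ideal.mem_span_singleton_self _) _

lemma pair_D1 : PairsWith c (D1 c) (∑ i, X (Sum.inl i)) := by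
  unfold PairsWith
  rw [pair_sum]
  exact (D1_master c fun i => X (Sum.inl i)).symm

lemma logder_D2 (i₀ : Fin n) : IsLogDer c (D2 c i₀) := by
  unfold IsLogDer
  rw [logder_sum]
  have h1 : ∑ i, Qdiv c i * (D2 c i₀ 0 * C (c i 0) + D2 c i₀ 1 * C (c i 1))
      = ∑ i, (1 : MvPolynomial (Fin n ⊕ Fin 2) ℂ) * Qdiv c i *
          ((-(C (c i₀ 1)) * Qdiv c i₀) * C (c i 0) + (C (c i₀ 0) * Qdiv c i₀) * C (c i 1)) := by
    refine Finset.sum_congr rfl fun i _ => ?_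
    rw [D2_zero, D2_one]; ring
  rw [h1, D2_master]
  exact Ideal.mem_span_singleton.2 (Dvd.intro _ rfl)

lemma pair_D2 (i₀ : Fin n) : PairsWith c (D2 c i₀)
    (∑ i ∈ (univ.erase i₀), X (Sum.inl i) * (∏ k ∈ (univ.erase i₀).erase i, fS c k) *
      C (c i₀ 0 * c i 1 - c i₀ 1 * c i 0)) := by
  unfold PairsWith
  rw [pair_sum]
  rw [show ∑ i, X (Sum.inl i) * Qdiv c i * (D2 c i₀ 0 * C (c i 0) + D2 c i₀ 1 * C (c i 1))
      = ∑ i, X (Sum.inl i) * Qdiv c i *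
          ((-(C (c i₀ 1)) * Qdiv c i₀) * C (c i 0) + (C (c i₀ 0) * Qdiv c i₀) * C (c i 1)) from
    Finset.sum_congr rfl fun i _ => by simp only [D2_zero, D2_one]]
  exact (D2_master c i₀ fun i => X (Sum.inl i)).symm

lemma QS_ne_zero (hnz : ∀ i, c i ≠ 0) : QS c ≠ 0 :=
  Finset.prod_ne_zero_iff.2 fun i _ => fS_ne_zero c i (hnz i)

lemma decompose (hnz : ∀ i, c i ≠ 0)
    (hprop : ∀ i k, i ≠ k → ∀ t : ℂ, c i ≠ t • c k) (i₀ : Fin n)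
    (θ : Fin 2 → MvPolynomial (Fin n ⊕ Fin 2) ℂ) (hθ : IsLogDer c θ) :
    ∃ u v, θ 0 = u * X (Sum.inr 0) + v * (-(C (c i₀ 1)) * Qdiv c i₀)
      ∧ θ 1 = u * X (Sum.inr 1) + v * (C (c i₀ 0) * Qdiv c i₀) := by
  classical
  obtain ⟨h, hh⟩ := Ideal.mem_span_singleton'.1 hθ
  have hsum : ∑ i, Qdiv c i * (θ 0 * C (c i 0) + θ 1 * C (c i 1)) = h * QS c :=
    (logder_sum c θ).symm.trans hh.symm
  -- each linear form divides `w i`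
  have h5 : ∀ i, fS c i ∣ θ 0 * C (c i 0) + θ 1 * C (c i 1) := by
    intro i
    have h1 : fS c i ∣ ∑ k, Qdiv c k * (θ 0 * C (c k 0) + θ 1 * C (c k 1)) := by
      rw [hsum, QS_eq c i]
      exact Dvd.dvd.mul_left (Dvd.intro _ rfl) h
    have h2 : fS c i ∣ ∑ k ∈ univ.erase i, Qdiv c k * (θ 0 * C (c k 0) + θ 1 * C (c k 1)) := by
      refine Finset.dvd_sum fun k hk => ?_
      have hik : i ∈ univ.erase k :=
        Finset.mem_erase.2 ⟨(Finset.mem_erase.1 hk).1.symm, Finset.mem_univ i⟩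
      exact (Finset.dvd_prod_of_mem _ hik).mul_right _
    have h3 : fS c i ∣ Qdiv c i * (θ 0 * C (c i 0) + θ 1 * C (c i 1)) := by
      have heq := Finset.sum_erase_add univ
        (fun k => Qdiv c k * (θ 0 * C (c k 0) + θ 1 * C (c k 1))) (Finset.mem_univ i)
      have : Qdiv c i * (θ 0 * C (c i 0) + θ 1 * C (c i 1))
          = (∑ k, Qdiv c k * (θ 0 * C (c k 0) + θ 1 * C (c k 1)))
            - ∑ k ∈ univ.erase i, Qdiv c k * (θ 0 * C (c k 0) + θ 1 * C (c k 1)) := by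
        rw [← heq]; ring
      rw [this]
      exact dvd_sub h1 h2
    have h4 : ¬ fS c i ∣ Qdiv c i := by
      intro hd
      obtain ⟨k, hk, hdk⟩ := ((prime_fS c i (hnz i)).dvd_finset_prod_iff _).1 hd
      exact not_dvd_fS c hprop hnz i k (Finset.mem_erase.1 hk).1.symm hdk
    exact ((prime_fS c i (hnz i)).2.2 _ _ h3).resolve_left h4
  -- each linear form divides E
  set E : MvPolynomial (Fin n ⊕ Fin 2) ℂ :=
    X (Sum.inr 0) * θ 1 - X (Sum.inr 1) * θ 0 with hE
  have hdE : ∀ i, fS c i ∣ E := by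
    intro i
    have e0 : C (c i 0) * E
        = fS c i * θ 1 - X (Sum.inr 1) * (θ 0 * C (c i 0) + θ 1 * C (c i 1)) := by
      rw [hE, fS_eq]; ring
    have e1 : C (c i 1) * E
        = X (Sum.inr 0) * (θ 0 * C (c i 0) + θ 1 * C (c i 1)) - fS c i * θ 0 := by
      rw [hE, fS_eq]; ring
    have hcases : c i 0 ≠ 0 ∨ c i 1 ≠ 0 := by
      by_contra hc
      push_neg at hc
      exact hnz i (funext fun j => by fin_cases j <;> simp [hc.1, hc.2])
    have key : ∀ a : ℂ, a ≠ 0 → fS c i ∣ C a * E → fS c i ∣ E := by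
      intro a ha hd
      have : E = C a⁻¹ * (C a * E) := by
        rw [← mul_assoc, ← C_mul, inv_mul_cancel₀ ha, C_1, one_mul]
      rw [this]
      exact hd.mul_left _
    rcases hcases with h0 | h1
    · refine key _ h0 ?_
      rw [e0]
      exact dvd_sub (Dvd.intro _ rfl) ((h5 i).mul_left _)
    · refine key _ h1 ?_
      rw [e1]
      exact dvd_sub ((h5 i).mul_left _) (Dvd.intro _ rfl)
  have hQE : QS c ∣ E :=
    prod_dvd_of_forall_dvd univ (fS c) E (fun i _ => prime_fS c i (hnz i))
      (fun i _ k _ hik => not_dvd_fS c hprop hnz i k hik) (fun i _ => hdE i)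
  obtain ⟨v, hv⟩ := hQE
  -- the reduced derivation
  have hxy : X (Sum.inr 0) * (θ 1 - v * (C (c i₀ 0) * Qdiv c i₀))
      = X (Sum.inr 1) * (θ 0 - v * (-(C (c i₀ 1)) * Qdiv c i₀)) := by
    have hQid : fS c i₀ * Qdiv c i₀ = QS c := (QS_eq c i₀).symm
    have expand : X (Sum.inr 0) * (θ 1 - v * (C (c i₀ 0) * Qdiv c i₀))
        - X (Sum.inr 1) * (θ 0 - v * (-(C (c i₀ 1)) * Qdiv c i₀))
        = E - v * (fS c i₀ * Qdiv c i₀) := by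
      rw [hE, fS_eq]; ring
    have : X (Sum.inr 0) * (θ 1 - v * (C (c i₀ 0) * Qdiv c i₀))
        - X (Sum.inr 1) * (θ 0 - v * (-(C (c i₀ 1)) * Qdiv c i₀)) = 0 := by
      rw [expand, hQid, hv]; ring
    linear_combination this
  have hvu01 : (Sum.inr 1 : Fin n ⊕ Fin 2) ≠ Sum.inr 0 := by simp
  have hpx : Prime (X (Sum.inr 0) : MvPolynomial (Fin n ⊕ Fin 2) ℂ) := by
    have := prime_lin (Sum.inr 0 : Fin n ⊕ Fin 2) (Sum.inr 1) hvu01 0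
    simpa using this
  have hxny : ¬ (X (Sum.inr 0) : MvPolynomial (Fin n ⊕ Fin 2) ℂ) ∣ X (Sum.inr 1) := by
    intro hd
    have hd' : (X (Sum.inr 0) - C 0 * X (Sum.inr 1) : MvPolynomial (Fin n ⊕ Fin 2) ℂ)
        ∣ X (Sum.inr 1) := by simpa using hd
    rw [dvd_iff_lsub_eq_zero _ _ hvu01] at hd'
    rw [lsub_X_of_ne _ _ _ hvu01] at hd'
    exact X_ne_zero _ hd'
  have hdvd0 : (X (Sum.inr 0) : MvPolynomial (Fin n ⊕ Fin 2) ℂ)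
      ∣ X (Sum.inr 1) * (θ 0 - v * (-(C (c i₀ 1)) * Qdiv c i₀)) :=
    ⟨θ 1 - v * (C (c i₀ 0) * Qdiv c i₀), hxy.symm⟩
  obtain ⟨u, hu⟩ := (hpx.2.2 _ _ hdvd0).resolve_left hxny
  have hτ1 : θ 1 - v * (C (c i₀ 0) * Qdiv c i₀) = X (Sum.inr 1) * u := by
    apply mul_left_cancel₀ hpx.ne_zero
    rw [hxy, hu]; ring
  exact ⟨u, v, by linear_combination hu, by linear_combination hτ1⟩

end PencilAux

namespace PencilAux

variable {n : ℕ} (c : Fin n → Fin 2 → ℂ)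

lemma fS_homog (i : Fin n) : IsWeightedHomogeneous xwt (fS c i) 1 := by
  rw [fS]
  refine IsWeightedHomogeneous.sum _ _ _ fun j _ => ?_
  have := (isWeightedHomogeneous_C (R := ℂ) xwt (c i j)).mul
    (isWeightedHomogeneous_X ℂ xwt (Sum.inr j : Fin n ⊕ Fin 2))
  simpa [xwt] using this

end PencilAux

theorem pencil_logarithmic_ideal'
    (n : ℕ) (hn : 2 ≤ n) (c : Fin n → Fin 2 → ℂ)
    (hnz : ∀ i, c i ≠ 0)
    (hprop : ∀ i k, i ≠ k → ∀ t : ℂ, c i ≠ t • c k)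
    (i₀ : Fin n) (hi₀ : (i₀ : ℕ) = 0)
    (g₁ g₂ : MvPolynomial (Fin n ⊕ Fin 2) ℂ)
    (hg₁ : g₁ = ∑ i, X (Sum.inl i))
    (hg₂ : g₂ = ∑ i ∈ (univ.erase i₀), X (Sum.inl i) *
        (∏ k ∈ (univ.erase i₀).erase i, fS c k) *
        C (c i₀ 0 * c i 1 - c i₀ 1 * c i 0)) :
    Ilog c = Ideal.span {g₁, g₂} ∧
      IsWeightedHomogeneous xwt g₁ 0 ∧ IsWeightedHomogeneous xwt g₂ (n - 2) := by
  classical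
  refine ⟨?_, ?_, ?_⟩
  · apply le_antisymm
    · rw [Ilog]
      refine Ideal.span_le.2 ?_
      rintro g ⟨θ, hlog, hpair⟩
      obtain ⟨u, v, h0, h1⟩ := PencilAux.decompose c hnz hprop i₀ θ hlog
      simp only [SetLike.mem_coe]
      rw [Ideal.mem_span_pair]
      refine ⟨u, v, ?_⟩
      have hQ := PencilAux.QS_ne_zero c hnz
      apply mul_left_cancel₀ hQ
      unfold PairsWith at hpair
      rw [PencilAux.pair_sum] at hpair
      calc QS c * (u * g₁ + v * g₂)
          = u * (QS c * g₁) + v * (QS c * g₂) := by ring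
        _ = u * (∑ i, X (Sum.inl i) * Qdiv c i *
                (X (Sum.inr 0) * C (c i 0) + X (Sum.inr 1) * C (c i 1)))
            + v * (∑ i, X (Sum.inl i) * Qdiv c i *
                ((-(C (c i₀ 1)) * Qdiv c i₀) * C (c i 0)
                  + (C (c i₀ 0) * Qdiv c i₀) * C (c i 1))) := by
            rw [hg₁, hg₂, ← PencilAux.D1_master, ← PencilAux.D2_master]
        _ = ∑ i, X (Sum.inl i) * Qdiv c i * (θ 0 * C (c i 0) + θ 1 * C (c i 1)) := by
            rw [Finset.mul_sum, Finset.mul_sum, ← Finset.sum_add_distrib]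
            refine Finset.sum_congr rfl fun i _ => ?_
            rw [h0, h1]
            ring
        _ = QS c * g := hpair.symm
    · refine Ideal.span_le.2 ?_
      rintro g hg
      simp only [Set.mem_insert_iff, Set.mem_singleton_iff] at hg
      rcases hg with rfl | rfl
      · exact Ideal.subset_span ⟨PencilAux.D1 c, PencilAux.logder_D1 c, hg₁ ▸ PencilAux.pair_D1 c⟩
      · exact Ideal.subset_span
          ⟨PencilAux.D2 c i₀, PencilAux.logder_D2 c i₀, hg₂ ▸ PencilAux.pair_D2 c i₀⟩
  · rw [hg₁]
    refine IsWeightedHomogeneous.sum _ _ _ fun i _ => ?_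
    exact isWeightedHomogeneous_X ℂ xwt (Sum.inl i)
  · rw [hg₂]
    refine IsWeightedHomogeneous.sum _ _ _ fun i hi => ?_
    have hX : IsWeightedHomogeneous xwt (X (Sum.inl i) : MvPolynomial (Fin n ⊕ Fin 2) ℂ) 0 :=
      isWeightedHomogeneous_X ℂ xwt (Sum.inl i)
    have hprod : IsWeightedHomogeneous xwt
        (∏ k ∈ (univ.erase i₀).erase i, fS c k) (n - 2) := by
      have := IsWeightedHomogeneous.prod ((univ.erase i₀).erase i) (fS c) (fun _ => 1)
        (fun k _ => PencilAux.fS_homog c k)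
      have hcard : ∑ _k ∈ (univ.erase i₀).erase i, 1 = n - 2 := by
        rw [Finset.sum_const, smul_eq_mul, mul_one, Finset.card_erase_of_mem hi,
          Finset.card_erase_of_mem (Finset.mem_univ i₀), Finset.card_univ, Fintype.card_fin]
        omega
      rwa [hcard] at this
    have hC : IsWeightedHomogeneous xwt
        (C (c i₀ 0 * c i 1 - c i₀ 1 * c i 0) : MvPolynomial (Fin n ⊕ Fin 2) ℂ) 0 :=
      isWeightedHomogeneous_C xwt _
    have := (hX.mul hprod).mul hC
    simpa using this


/-!
STATEMENT 10: For an arrangement of `n ≥ 2` distinct lines through the origin in `ℂ²`,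
the logarithmic ideal `I(A) ⊂ ℂ[a_1,…,a_n,x_1,x_2]` is a complete intersection generated
by two homogeneous elements of `x`-degrees `0` and `n-2`:
`g₁ = ∑ i, a_i` and
`g₂ = ∑_{i ≠ 1} a_i · (Q/(f_1 f_i)) · (∂f_1/∂x_1 ∂f_i/∂x_2 − ∂f_1/∂x_2 ∂f_i/∂x_1)`.
-/
theorem pencil_logarithmic_ideal
    (n : ℕ) (hn : 2 ≤ n) (c : Fin n → Fin 2 → ℂ)
    (hnz : ∀ i, c i ≠ 0)
    (hprop : ∀ i k, i ≠ k → ∀ t : ℂ, c i ≠ t • c k)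
    (i₀ : Fin n) (hi₀ : (i₀ : ℕ) = 0)
    (g₁ g₂ : MvPolynomial (Fin n ⊕ Fin 2) ℂ)
    (hg₁ : g₁ = ∑ i, X (Sum.inl i))
    (hg₂ : g₂ = ∑ i ∈ (univ.erase i₀), X (Sum.inl i) *
        (∏ k ∈ (univ.erase i₀).erase i, fS c k) *
        C (c i₀ 0 * c i 1 - c i₀ 1 * c i 0)) :
    Ilog c = Ideal.span {g₁, g₂} ∧
      IsWeightedHomogeneous xwt g₁ 0 ∧ IsWeightedHomogeneous xwt g₂ (n - 2) := by
  exact pencil_logarithmic_ideal' n hn c hnz hprop i₀ hi₀ g₁ g₂ hg₁ hg₂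
end
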